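/- Let σ be a weight, 1 < p ≤ q < ∞, D a dyadic grid, and S a sparse subset of D with pairwise disjoint sets E_Q ⊆ Q, |E_Q| ≥ |Q|/2. Fix P ∈ D and r ≥ 0, and let S_r = {Q ∈ S, Q ⊆ P : 2^{r-1} ≤ ρ_σ(Q) ≤ 2^r}, where ρ_σ(Q) = (1/σ(Q)) ∫_Q M(σ𝟙_Q) and M is the Hardy–Littlewood maximal operator. Then ∑_{Q ∈ S_r} σ(Q)^{q/p} ≲ 2^{qr/p} σ(P)^{q/p}. -/

import Mathlib

open MeasureTheory Set ENNReal

noncomputable section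

/-- An axis-parallel cube in `ℝⁿ`. -/
structure Cube (n : ℕ) where
  corner : Fin n → ℝ
  side : ℝ
  side_pos : 0 < side

namespace Cube

/-- The underlying (half-open) set of a cube. -/
def toSet {n : ℕ} (Q : Cube n) : Set (Fin n → ℝ) :=
  {x | ∀ i, Q.corner i ≤ x i ∧ x i < Q.corner i + Q.side}

/-- The volume `|Q| = side^n` of a cube. -/
def vol {n : ℕ} (Q : Cube n) : ℝ := Q.side ^ n

end Cube

/-- A dyadic grid: cubes of dyadic side lengths, nested or disjoint, partitioning `ℝⁿ`
at every scale. -/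
def IsDyadicGrid {n : ℕ} (D : Set (Cube n)) : Prop :=
  (∀ Q ∈ D, ∃ k : ℤ, Q.side = 2 ^ k) ∧
  (∀ Q ∈ D, ∀ R ∈ D, (Q.toSet ∩ R.toSet).Nonempty →
      Q.toSet ⊆ R.toSet ∨ R.toSet ⊆ Q.toSet) ∧
  (∀ k : ℤ, (⋃ Q ∈ {Q ∈ D | Q.side = 2 ^ k}, Q.toSet) = univ)

/-- The average `⟨f⟩_Q^μ = (1/μ(Q)) ∫_Q f dμ`. -/
def avg {n : ℕ} (μ : Measure (Fin n → ℝ)) (f : (Fin n → ℝ) → ℝ≥0∞) (Q : Cube n) : ℝ≥0∞ :=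
  (∫⁻ x in Q.toSet, f x ∂μ) / μ Q.toSet

/-- The Lebesgue average `⟨f⟩_Q = (1/|Q|) ∫_Q f`. -/
def lebAvg {n : ℕ} (f : (Fin n → ℝ) → ℝ≥0∞) (Q : Cube n) : ℝ≥0∞ :=
  (∫⁻ x in Q.toSet, f x) / ENNReal.ofReal Q.vol

/-- `σ(Q) = ∫_Q σ dx`. -/
def wt {n : ℕ} (σ : (Fin n → ℝ) → ℝ≥0∞) (Q : Cube n) : ℝ≥0∞ :=
  ∫⁻ x in Q.toSet, σ x

/-- The weighted average `⟨f⟩_Q^σ = (1/σ(Q)) ∫_Q f σ dx`. -/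
def avgw {n : ℕ} (σ f : (Fin n → ℝ) → ℝ≥0∞) (Q : Cube n) : ℝ≥0∞ :=
  (∫⁻ x in Q.toSet, f x * σ x) / wt σ Q

/-- The dyadic fractional maximal operator `M_α^D`. -/
def dyFracMax {n : ℕ} (D : Set (Cube n)) (α : ℝ) (f : (Fin n → ℝ) → ℝ≥0∞)
    (x : Fin n → ℝ) : ℝ≥0∞ :=
  ⨆ (Q : Cube n) (_ : Q ∈ D) (_ : x ∈ Q.toSet),
    ENNReal.ofReal (Q.vol ^ (α / (n : ℝ))) * lebAvg f Q

/-- The fractional maximal operator `M_α` (supremum over all cubes). -/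
def fracMax {n : ℕ} (α : ℝ) (f : (Fin n → ℝ) → ℝ≥0∞) (x : Fin n → ℝ) : ℝ≥0∞ :=
  ⨆ (Q : Cube n) (_ : x ∈ Q.toSet), ENNReal.ofReal (Q.vol ^ (α / (n : ℝ))) * lebAvg f Q

/-- The Hardy–Littlewood maximal operator (over all cubes). -/
def hlMax {n : ℕ} (f : (Fin n → ℝ) → ℝ≥0∞) (x : Fin n → ℝ) : ℝ≥0∞ :=
  ⨆ (Q : Cube n) (_ : x ∈ Q.toSet), lebAvg f Q

/-- The entropy functional `ρ_σ(Q) = (1/σ(Q)) ∫_Q M(σ 1_Q)`. -/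
def entropy {n : ℕ} (σ : (Fin n → ℝ) → ℝ≥0∞) (Q : Cube n) : ℝ≥0∞ :=
  (∫⁻ x in Q.toSet, hlMax (Q.toSet.indicator σ) x) / wt σ Q

/-- The fractional integral operator `I_α f (x) = ∫ f(y) |x-y|^{α-n} dy`. -/
def fracInt {n : ℕ} (α : ℝ) (f : (Fin n → ℝ) → ℝ≥0∞) (x : Fin n → ℝ) : ℝ≥0∞ :=
  ∫⁻ y, f y * ENNReal.ofReal (Real.sqrt (∑ i, (x i - y i) ^ 2) ^ (α - (n : ℝ)))

/-- `Q` is a maximal element of `S` strictly contained in `P`. -/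
def IsMaxChild {n : ℕ} (S : Set (Cube n)) (P Q : Cube n) : Prop :=
  Q ∈ S ∧ Q.toSet ⊂ P.toSet ∧
    ∀ R ∈ S, R.toSet ⊂ P.toSet → Q.toSet ⊆ R.toSet → R.toSet ⊆ Q.toSet

/-- A sparse collection of cubes: the maximal elements strictly inside any `P` in the
collection have total volume at most `|P|/2`. -/
def IsSparse {n : ℕ} (S : Set (Cube n)) : Prop :=
  ∀ P ∈ S, (∑' Q : {Q : Cube n // IsMaxChild S P Q}, ENNReal.ofReal Q.1.vol)
      ≤ ENNReal.ofReal P.vol / 2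

/-- `P` is the `S`-parent of `Q`: the minimal element of `S` containing `Q`. -/
def IsSParent {n : ℕ} (S : Set (Cube n)) (Q P : Cube n) : Prop :=
  P ∈ S ∧ Q.toSet ⊆ P.toSet ∧ ∀ R ∈ S, Q.toSet ⊆ R.toSet → P.toSet ⊆ R.toSet

/-- The separated-bump entropy functional
`ϱ_σ^{α,p,q}(Q) = σ(Q)^{-q/p} ∫_Q M_α(1_Q σ)^{q/p}`. -/
def sepRho {n : ℕ} (α p q : ℝ) (σ : (Fin n → ℝ) → ℝ≥0∞) (Q : Cube n) : ℝ≥0∞ :=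
  (∫⁻ x in Q.toSet, fracMax α (Q.toSet.indicator σ) x ^ (q / p)) / wt σ Q ^ (q / p)

/-- The separated entropy bump constant `[[σ,w]]_{α,p,q}` with bump function `ε`. -/
def sepBump {n : ℕ} (α p q : ℝ) (ε : ℝ → ℝ) (σ w : (Fin n → ℝ) → ℝ≥0∞) : ℝ≥0∞ :=
  ⨆ Q : Cube n,
    (ENNReal.ofReal (Q.vol ^ (α / (n : ℝ))) * lebAvg σ Q) ^ (q * (1 - 1 / p)) *
      lebAvg w Q * sepRho α p q σ Q * ENNReal.ofReal (ε (sepRho α p q σ Q).toReal)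

/-- The one-bump entropy quantity for the fractional maximal operator:
`β(Q) = |Q|^{α/n-1} σ(Q)^{1/p'} w(Q)^{1/q} ρ_σ(Q)^{1/p} ε_q(ρ_σ(Q))`. -/
def maxBump {n : ℕ} (α p q : ℝ) (εq : ℝ → ℝ) (σ w : (Fin n → ℝ) → ℝ≥0∞)
    (Q : Cube n) : ℝ≥0∞ :=
  ENNReal.ofReal (Q.vol ^ (α / (n : ℝ) - 1)) * wt σ Q ^ (1 - 1 / p) * wt w Q ^ (1 / q) *
    entropy σ Q ^ (1 / p) * ENNReal.ofReal (εq (entropy σ Q).toReal)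

/-- The one-bump entropy quantity for the fractional integral operator:
`β(Q) = |Q|^{α/n-1} σ(Q)^{1/p'} w(Q)^{1/q} ρ_σ(Q)^{1/p} ε_p(ρ_σ(Q)) ρ_w(Q)^{1/q'} ε_{q'}(ρ_w(Q))`. -/
def intBump {n : ℕ} (α p q : ℝ) (εp εq' : ℝ → ℝ) (σ w : (Fin n → ℝ) → ℝ≥0∞)
    (Q : Cube n) : ℝ≥0∞ :=
  ENNReal.ofReal (Q.vol ^ (α / (n : ℝ) - 1)) * wt σ Q ^ (1 - 1 / p) * wt w Q ^ (1 / q) *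
    entropy σ Q ^ (1 / p) * ENNReal.ofReal (εp (entropy σ Q).toReal) *
    entropy w Q ^ (1 - 1 / q) * ENNReal.ofReal (εq' (entropy w Q).toReal)


/-! ### Auxiliary lemmas for `stmt10` -/

namespace Cube

variable {n : ℕ}

lemma toSet_eq (Q : Cube n) :
    Q.toSet = Set.pi Set.univ (fun i => Set.Ico (Q.corner i) (Q.corner i + Q.side)) := by
  ext x
  simp [Cube.toSet, Set.mem_pi]

lemma measurableSet_toSet (Q : Cube n) : MeasurableSet Q.toSet := by
  rw [toSet_eq]
  exact MeasurableSet.univ_pi fun i => measurableSet_Ico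

lemma vol_pos (Q : Cube n) : 0 < Q.vol := pow_pos Q.side_pos n

lemma volume_toSet (Q : Cube n) : volume Q.toSet = ENNReal.ofReal Q.vol := by
  rw [toSet_eq, volume_pi_pi]
  have h : ∀ i : Fin n, volume (Set.Ico (Q.corner i) (Q.corner i + Q.side))
      = ENNReal.ofReal Q.side := by
    intro i
    rw [Real.volume_Ico, add_sub_cancel_left]
  simp only [h, Finset.prod_const, Finset.card_univ, Fintype.card_fin]
  rw [Cube.vol, ENNReal.ofReal_pow Q.side_pos.le]

lemma corner_mem (Q : Cube n) : Q.corner ∈ Q.toSet :=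
  fun _ => ⟨le_rfl, lt_add_of_pos_right _ Q.side_pos⟩

lemma eq_of_subset_of_side_eq {A B : Cube n} (h : A.toSet ⊆ B.toSet)
    (hs : A.side = B.side) : A = B := by
  have hc : ∀ i, A.corner i = B.corner i := by
    intro i
    refine le_antisymm ?_ ((h A.corner_mem) i).1
    by_contra hlt
    push_neg at hlt
    set ε := min (A.corner i - B.corner i) A.side with hεdef
    have hε0 : 0 < ε := lt_min (by linarith) A.side_pos
    have hεs : ε ≤ A.side := min_le_right _ _
    have hεd : ε ≤ A.corner i - B.corner i := min_le_left _ _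
    set x := Function.update A.corner i (A.corner i + A.side - ε) with hx
    have hxA : x ∈ A.toSet := by
      intro j
      rcases eq_or_ne j i with rfl | hj
      · rw [hx]
        rw [Function.update_self]
        constructor <;> linarith
      · rw [hx, Function.update_of_ne hj]
        exact ⟨le_rfl, lt_add_of_pos_right _ A.side_pos⟩
    have hxB := (h hxA) i
    rw [hx, Function.update_self] at hxB
    have h2 := hxB.2
    rw [← hs] at h2
    linarith
  cases A with
  | mk ca sa hsa =>
    cases B with
    | mk cb sb hsb =>
      simp only [Cube.mk.injEq]
      exact ⟨funext hc, hs⟩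

lemma vol_le_of_subset {A B : Cube n} (h : A.toSet ⊆ B.toSet) : A.vol ≤ B.vol := by
  have h2 := measure_mono (μ := volume) h
  rw [A.volume_toSet, B.volume_toSet] at h2
  exact (ENNReal.ofReal_le_ofReal_iff B.vol_pos.le).mp h2

lemma side_le_of_subset (hn : n ≠ 0) {A B : Cube n} (h : A.toSet ⊆ B.toSet) :
    A.side ≤ B.side :=
  (pow_le_pow_iff_left₀ A.side_pos.le B.side_pos.le hn).mp (vol_le_of_subset h)

end Cube

section Stmt10Aux

variable {n : ℕ}

lemma grid_countable {D : Set (Cube n)} (hD : IsDyadicGrid D) : D.Countable := by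
  have key : ∀ Q : Cube n, ∃ q : Fin n → ℚ, (fun i => (q i : ℝ)) ∈ Q.toSet := by
    intro Q
    have h : ∀ i : Fin n, ∃ qq : ℚ, Q.corner i < qq ∧ (qq : ℝ) < Q.corner i + Q.side :=
      fun i => exists_rat_btwn (lt_add_of_pos_right _ Q.side_pos)
    choose qv h1 h2 using h
    exact ⟨qv, fun i => ⟨(h1 i).le, h2 i⟩⟩
  have hsub : D ⊆ ⋃ k : ℤ, {Q | Q ∈ D ∧ Q.side = 2 ^ k} := by
    intro Q hQ
    obtain ⟨k, hk⟩ := hD.1 Q hQ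
    exact Set.mem_iUnion.mpr ⟨k, hQ, hk⟩
  refine Set.Countable.mono hsub (Set.countable_iUnion fun k => ?_)
  rw [← Set.countable_coe_iff]
  refine Function.Injective.countable
    (f := fun Q : ↥{Q : Cube n | Q ∈ D ∧ Q.side = 2 ^ k} => (key Q.1).choose) ?_
  intro Q R hQR
  have hQmem := (key Q.1).choose_spec
  have hRmem := (key R.1).choose_spec
  have hQR' : (key Q.1).choose = (key R.1).choose := hQR
  rw [hQR'] at hQmem
  have hne : (Q.1.toSet ∩ R.1.toSet).Nonempty := ⟨_, hQmem, hRmem⟩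
  have hside : Q.1.side = R.1.side := Q.2.2.trans R.2.2.symm
  rcases hD.2.1 Q.1 Q.2.1 R.1 R.2.1 hne with h | h
  · exact Subtype.ext (Cube.eq_of_subset_of_side_eq h hside)
  · exact Subtype.ext (Cube.eq_of_subset_of_side_eq h hside.symm).symm

lemma exists_max_side {U : Set (Cube n)} (hUne : U.Nonempty)
    (hdy : ∀ R ∈ U, ∃ k : ℤ, R.side = 2 ^ k)
    {kb : ℤ} (hbd : ∀ R ∈ U, R.side ≤ 2 ^ kb) :
    ∃ m ∈ U, ∀ R ∈ U, R.side ≤ m.side := by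
  have Hinh : ∃ k : ℤ, ∃ R ∈ U, R.side = 2 ^ k := by
    obtain ⟨R, hR⟩ := hUne
    obtain ⟨k, hk⟩ := hdy R hR
    exact ⟨k, R, hR, hk⟩
  have Hbdd : ∃ b : ℤ, ∀ k : ℤ, (∃ R ∈ U, R.side = 2 ^ k) → k ≤ b := by
    refine ⟨kb, fun k hk' => ?_⟩
    obtain ⟨R, hR, hk⟩ := hk'
    have h2 := hbd R hR
    rw [hk] at h2
    exact (zpow_le_zpow_iff_right₀ (one_lt_two : (1:ℝ) < 2)).mp h2
  obtain ⟨k0, ⟨m, hmU, hmk⟩, hmax⟩ := Int.exists_greatest_of_bdd Hbdd Hinh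
  refine ⟨m, hmU, fun R hR => ?_⟩
  obtain ⟨k, hk⟩ := hdy R hR
  rw [hk, hmk]
  exact (zpow_le_zpow_iff_right₀ (one_lt_two : (1:ℝ) < 2)).mpr (hmax k ⟨R, hR, hk⟩)

lemma tsum_rpow_le {ι : Type*} (a : ι → ℝ≥0∞) {s : ℝ} (hs : 1 ≤ s) :
    (∑' i, a i ^ s) ≤ (∑' i, a i) ^ s := by
  have hs0 : (0:ℝ) < s := lt_of_lt_of_le one_pos hs
  have hcan : s - 1 + 1 = s := by ring
  set A := ∑' i, a i with hA
  rcases eq_or_ne A ⊤ with htop | htop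
  · rw [htop, ENNReal.top_rpow_of_pos hs0]
    exact le_top
  rcases eq_or_ne A 0 with h0 | h0
  · have hz : ∀ i, a i = 0 := by
      intro i
      have h1 : a i ≤ A := ENNReal.le_tsum i
      rw [h0] at h1
      exact le_antisymm h1 (zero_le)
    have hz' : ∀ i, a i ^ s = 0 := fun i => by rw [hz i, ENNReal.zero_rpow_of_pos hs0]
    rw [tsum_congr hz']
    simp
  have step : ∀ i, a i ^ s ≤ A ^ (s - 1) * a i := by
    intro i
    rcases eq_or_ne (a i) 0 with h | h
    · rw [h, ENNReal.zero_rpow_of_pos hs0]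
      exact zero_le
    have hit : a i ≠ ⊤ := fun hh => htop (top_le_iff.mp (hh ▸ ENNReal.le_tsum i))
    have heq : a i ^ s = a i ^ (s - 1) * a i := by
      nth_rewrite 3 [← ENNReal.rpow_one (a i)]
      rw [← ENNReal.rpow_add _ _ h hit, hcan]
    rw [heq]
    exact mul_le_mul_left (ENNReal.rpow_le_rpow (ENNReal.le_tsum i) (by linarith)) _
  calc (∑' i, a i ^ s) ≤ ∑' i, A ^ (s - 1) * a i :=
        Summable.tsum_le_tsum step ENNReal.summable ENNReal.summable
    _ = A ^ (s - 1) * A := ENNReal.tsum_mul_left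
    _ = A ^ s := by
        nth_rewrite 2 [← ENNReal.rpow_one A]
        rw [← ENNReal.rpow_add _ _ h0 htop, hcan]

lemma wt_mono {σ : (Fin n → ℝ) → ℝ≥0∞} {A B : Cube n} (h : A.toSet ⊆ B.toSet) :
    wt σ A ≤ wt σ B :=
  lintegral_mono' (Measure.restrict_mono h le_rfl) le_rfl

lemma wt_ne_top_of_entropy_ne_zero {σ : (Fin n → ℝ) → ℝ≥0∞} {Q : Cube n}
    (h : entropy σ Q ≠ 0) : wt σ Q ≠ ⊤ := by
  intro hw
  apply h
  rw [entropy, hw, ENNReal.div_top]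

lemma wt_ne_zero_of_entropy_ne_zero {σ : (Fin n → ℝ) → ℝ≥0∞} {Q : Cube n}
    (h : entropy σ Q ≠ 0) : wt σ Q ≠ 0 := by
  intro hw
  apply h
  have hmax : ∀ x, hlMax (Q.toSet.indicator σ) x = 0 := by
    intro x
    refine le_antisymm (iSup_le fun R => iSup_le fun _ => ?_) (zero_le)
    have hint : (∫⁻ y in R.toSet, Q.toSet.indicator σ y) = 0 := by
      rw [lintegral_indicator Q.measurableSet_toSet,
        Measure.restrict_restrict Q.measurableSet_toSet]
      refine le_antisymm ?_ (zero_le)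
      calc (∫⁻ y in Q.toSet ∩ R.toSet, σ y)
          ≤ ∫⁻ y in Q.toSet, σ y :=
            lintegral_mono' (Measure.restrict_mono Set.inter_subset_left le_rfl) le_rfl
        _ = 0 := hw
    rw [lebAvg, hint, ENNReal.zero_div]
  have hI : (∫⁻ x in Q.toSet, hlMax (Q.toSet.indicator σ) x) = 0 := by
    rw [lintegral_congr hmax]
    simp
  rw [entropy, hI, ENNReal.zero_div]

end Stmt10Aux

set_option maxHeartbeats 2000000 in
/-- the entropy-level Carleson estimate
`∑_{Q ∈ S_r} σ(Q)^{q/p} ≲ 2^{qr/p} σ(P)^{q/p}`. -/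
theorem stmt10 (n : ℕ) (p q : ℝ) (hp : 1 < p) (hpq : p ≤ q) :
    ∃ C : ℝ≥0∞, C ≠ ∞ ∧
    ∀ (σ : (Fin n → ℝ) → ℝ≥0∞), Measurable σ →
    ∀ (D : Set (Cube n)), IsDyadicGrid D →
    ∀ S : Set (Cube n), S ⊆ D → IsSparse S →
    ∀ E : Cube n → Set (Fin n → ℝ), (∀ Q, E Q ⊆ Q.toSet) →
      (∀ Q R : Cube n, Q ≠ R → Disjoint (E Q) (E R)) →
      (∀ Q ∈ S, ENNReal.ofReal Q.vol ≤ 2 * volume (E Q)) →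
    ∀ P ∈ D, ∀ r : ℕ,
      (∑' Q : {Q : Cube n // Q ∈ S ∧ Q.toSet ⊆ P.toSet ∧
          (2:ℝ≥0∞) ^ ((r:ℝ) - 1) ≤ entropy σ Q ∧ entropy σ Q ≤ (2:ℝ≥0∞) ^ (r:ℝ)},
          wt σ Q.1 ^ (q/p))
        ≤ C * (2:ℝ≥0∞) ^ (q * r / p) * wt σ P ^ (q/p) := by
  classical
  have hp0 : (0:ℝ) < p := lt_trans one_pos hp
  have hq0 : (0:ℝ) < q := lt_of_lt_of_le hp0 hpq
  have hs1 : (1:ℝ) ≤ q / p := (one_le_div hp0).mpr hpq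
  have hs0 : (0:ℝ) < q / p := lt_of_lt_of_le one_pos hs1
  refine ⟨(2:ℝ≥0∞) ^ (q / p), ENNReal.rpow_ne_top_of_nonneg hs0.le ENNReal.ofNat_ne_top, ?_⟩
  intro σ hσ D hD S hSD hSp E hE1 hE2 hE3 P hP r
  set T : Set (Cube n) := {Q | Q ∈ S ∧ Q.toSet ⊆ P.toSet ∧
      (2:ℝ≥0∞) ^ ((r:ℝ) - 1) ≤ entropy σ Q ∧ entropy σ Q ≤ (2:ℝ≥0∞) ^ (r:ℝ)} with hTdef
  show (∑' Q : ↥T, wt σ Q.1 ^ (q/p))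
      ≤ (2:ℝ≥0∞) ^ (q/p) * (2:ℝ≥0∞) ^ (q * r / p) * wt σ P ^ (q/p)
  have hone2 : (1:ℝ≥0∞) ≤ (2:ℝ≥0∞) ^ (q/p) * (2:ℝ≥0∞) ^ (q * r / p) := by
    have h1 : (1:ℝ≥0∞) ≤ (2:ℝ≥0∞) ^ (q/p) := by
      calc (1:ℝ≥0∞) = 2 ^ (0:ℝ) := ENNReal.rpow_zero.symm
        _ ≤ 2 ^ (q/p) := ENNReal.rpow_le_rpow_of_exponent_le one_le_two hs0.le
    have h2 : (1:ℝ≥0∞) ≤ (2:ℝ≥0∞) ^ (q * r / p) := by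
      calc (1:ℝ≥0∞) = 2 ^ (0:ℝ) := ENNReal.rpow_zero.symm
        _ ≤ 2 ^ (q * r / p) :=
          ENNReal.rpow_le_rpow_of_exponent_le one_le_two
            (div_nonneg (mul_nonneg hq0.le (Nat.cast_nonneg r)) hp0.le)
    calc (1:ℝ≥0∞) = 1 * 1 := (mul_one 1).symm
      _ ≤ _ := mul_le_mul' h1 h2
  rcases Nat.eq_zero_or_pos n with hn0 | hnpos
  · -- degenerate case `n = 0`
    subst hn0
    have hone : ∀ Q, Q ∈ S → (E Q).Nonempty := by
      intro Q hQ
      rcases Set.eq_empty_or_nonempty (E Q) with he | he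
      · exfalso
        have h3 := hE3 Q hQ
        rw [he, measure_empty, mul_zero] at h3
        have h4 : ENNReal.ofReal Q.vol = 0 := le_antisymm h3 (zero_le)
        rw [ENNReal.ofReal_eq_zero] at h4
        linarith [Q.vol_pos]
      · exact he
    have hss : ∀ a b : ↥T, a = b := by
      intro a b
      apply Subtype.ext
      by_contra hne
      obtain ⟨x, hx⟩ := hone a.1 a.2.1
      obtain ⟨y, hy⟩ := hone b.1 b.2.1
      have hxy : x = y := Subsingleton.elim x y
      exact Set.disjoint_left.mp (hE2 a.1 b.1 hne) hx (hxy ▸ hy)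
    obtain he | hne := isEmpty_or_nonempty ↥T
    · rw [tsum_empty]
      exact zero_le
    · obtain ⟨a⟩ := hne
      have heq : (∑' Q : ↥T, wt σ Q.1 ^ (q/p)) = wt σ a.1 ^ (q/p) :=
        tsum_eq_single a (fun b hb => absurd (hss b a) hb)
      rw [heq]
      calc wt σ a.1 ^ (q/p) ≤ wt σ P ^ (q/p) :=
            ENNReal.rpow_le_rpow (wt_mono a.2.2.1) hs0.le
        _ ≤ (2:ℝ≥0∞) ^ (q/p) * (2:ℝ≥0∞) ^ (q * r / p) * wt σ P ^ (q/p) :=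
            le_mul_of_one_le_left' hone2
  -- main case `0 < n`
  have hn : n ≠ 0 := hnpos.ne'
  have hDc : D.Countable := grid_countable hD
  have hSc : S.Countable := hDc.mono hSD
  have hTc : T.Countable := hSc.mono (fun Q hQ => hQ.1)
  haveI : Countable ↥T := hTc.to_subtype
  have hnest : ∀ Q ∈ S, ∀ R ∈ S, (Q.toSet ∩ R.toSet).Nonempty →
      Q.toSet ⊆ R.toSet ∨ R.toSet ⊆ Q.toSet :=
    fun Q hQ R hR => hD.2.1 Q (hSD hQ) R (hSD hR)
  -- existence of maximal children
  have hchild : ∀ Q ∈ S, ∀ R ∈ S, Q.toSet ⊆ R.toSet → Q ≠ R →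
      ∃ C, IsMaxChild S R C ∧ Q.toSet ⊆ C.toSet := by
    intro Q hQ R hR hsub hne
    obtain ⟨kR, hkR⟩ := hD.1 R (hSD hR)
    have hQRss : Q.toSet ⊂ R.toSet := by
      refine ssubset_of_subset_of_ne hsub (fun he => hne ?_)
      exact Cube.eq_of_subset_of_side_eq he.le
        (le_antisymm (Cube.side_le_of_subset hn he.le) (Cube.side_le_of_subset hn he.ge))
    have hUne : ({C | C ∈ S ∧ Q.toSet ⊆ C.toSet ∧ C.toSet ⊂ R.toSet} : Set (Cube n)).Nonempty :=
      ⟨Q, hQ, subset_rfl, hQRss⟩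
    have hdy : ∀ C ∈ {C | C ∈ S ∧ Q.toSet ⊆ C.toSet ∧ C.toSet ⊂ R.toSet}, ∃ k : ℤ, C.side = 2 ^ k :=
      fun C hC => hD.1 C (hSD hC.1)
    have hbd : ∀ C ∈ {C | C ∈ S ∧ Q.toSet ⊆ C.toSet ∧ C.toSet ⊂ R.toSet}, C.side ≤ 2 ^ kR := by
      intro C hC
      rw [← hkR]
      exact Cube.side_le_of_subset hn hC.2.2.subset
    obtain ⟨C, hCU, hmax⟩ := exists_max_side hUne hdy hbd
    refine ⟨C, ⟨hCU.1, hCU.2.2, ?_⟩, hCU.2.1⟩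
    intro R' hR' hR'ss hCR'
    have hR'U : R' ∈ {C | C ∈ S ∧ Q.toSet ⊆ C.toSet ∧ C.toSet ⊂ R.toSet} :=
      ⟨hR', hCU.2.1.trans hCR', hR'ss⟩
    have hCeq : C = R' := Cube.eq_of_subset_of_side_eq hCR'
      (le_antisymm (Cube.side_le_of_subset hn hCR') (hmax R' hR'U))
    rw [← hCeq]
  -- the disjoint measurable subsets produced by sparseness
  have hChc : ∀ Q : Cube n, ({R | IsMaxChild S Q R} : Set (Cube n)).Countable :=
    fun Q => hSc.mono fun R hR => hR.1
  set F : Cube n → Set (Fin n → ℝ) :=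
    fun Q => Q.toSet \ ⋃ R ∈ {R | IsMaxChild S Q R}, R.toSet with hFdef
  have hFm : ∀ Q, MeasurableSet (F Q) := fun Q =>
    Q.measurableSet_toSet.diff
      (MeasurableSet.biUnion (hChc Q) fun R _ => R.measurableSet_toSet)
  have hFsub : ∀ Q, F Q ⊆ Q.toSet := fun Q => Set.diff_subset
  have hFvol : ∀ Q ∈ S, ENNReal.ofReal Q.vol / 2 ≤ volume (F Q) := by
    intro Q hQ
    have hU : volume (⋃ R ∈ {R | IsMaxChild S Q R}, R.toSet) ≤ ENNReal.ofReal Q.vol / 2 := by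
      refine le_trans (measure_biUnion_le volume (hChc Q) _) ?_
      have hcg : (∑' R : ↥{R | IsMaxChild S Q R}, volume R.1.toSet)
          = ∑' R : {R : Cube n // IsMaxChild S Q R}, ENNReal.ofReal R.1.vol :=
        tsum_congr fun R => R.1.volume_toSet
      rw [hcg]
      exact hSp Q hQ
    calc ENNReal.ofReal Q.vol / 2
        = ENNReal.ofReal Q.vol - ENNReal.ofReal Q.vol / 2 :=
          (ENNReal.sub_half ENNReal.ofReal_ne_top).symm
      _ ≤ volume Q.toSet - volume (⋃ R ∈ {R | IsMaxChild S Q R}, R.toSet) := by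
          rw [Q.volume_toSet]
          exact tsub_le_tsub_left hU _
      _ ≤ volume (F Q) := le_measure_diff
  have hFdisj : ∀ Q ∈ S, ∀ R ∈ S, Q ≠ R → Disjoint (F Q) (F R) := by
    have hdir : ∀ Q ∈ S, ∀ R ∈ S, Q.toSet ⊆ R.toSet → Q ≠ R → Disjoint (F Q) (F R) := by
      intro Q hQ R hR hsub hne
      obtain ⟨C, hC, hQC⟩ := hchild Q hQ R hR hsub hne
      rw [Set.disjoint_left]
      intro x hxQ hxR
      exact hxR.2 (Set.mem_biUnion hC (hQC (hFsub Q hxQ)))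
    intro Q hQ R hR hne
    by_cases hint : (Q.toSet ∩ R.toSet).Nonempty
    · rcases hnest Q hQ R hR hint with h | h
      · exact hdir Q hQ R hR h hne
      · exact (hdir R hR Q hQ h hne.symm).symm
    · rw [Set.not_nonempty_iff_eq_empty] at hint
      exact Set.disjoint_of_subset (hFsub Q) (hFsub R)
        (Set.disjoint_iff_inter_eq_empty.mpr hint)
  -- weights of cubes in `T` are nondegenerate
  have hTw : ∀ Q ∈ T, wt σ Q ≠ 0 ∧ wt σ Q ≠ ⊤ := by
    intro Q hQ
    have h2 : (0:ℝ≥0∞) < 2 ^ ((r:ℝ) - 1) := ENNReal.rpow_pos two_pos ENNReal.ofNat_ne_top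
    have hpos : entropy σ Q ≠ 0 := (lt_of_lt_of_le h2 hQ.2.2.1).ne'
    exact ⟨wt_ne_zero_of_entropy_ne_zero hpos, wt_ne_top_of_entropy_ne_zero hpos⟩
  -- the key local estimate
  have hinner : ∀ m ∈ T, (∑' Q : ↥{Q | Q ∈ T ∧ Q.toSet ⊆ m.toSet}, wt σ Q.1)
      ≤ 2 * (2:ℝ≥0∞) ^ (r:ℝ) * wt σ m := by
    intro m hm
    haveI : Countable ↥{Q | Q ∈ T ∧ Q.toSet ⊆ m.toSet} :=
      ((hTc.mono (fun Q (hQ : Q ∈ T ∧ Q.toSet ⊆ m.toSet) => hQ.1)).to_subtype)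
    have key : ∀ Q, Q ∈ T → Q.toSet ⊆ m.toSet →
        wt σ Q ≤ 2 * ∫⁻ x in F Q, hlMax (m.toSet.indicator σ) x := by
      intro Q hQT hQm
      have hQS : Q ∈ S := hQT.1
      have hvne : ENNReal.ofReal Q.vol ≠ 0 := by
        rw [Ne, ENNReal.ofReal_eq_zero, not_le]
        exact Q.vol_pos
      have hc : ∀ x ∈ Q.toSet,
          wt σ Q / ENNReal.ofReal Q.vol ≤ hlMax (m.toSet.indicator σ) x := by
        intro x hx
        have havg : lebAvg (m.toSet.indicator σ) Q = wt σ Q / ENNReal.ofReal Q.vol := by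
          rw [lebAvg]
          congr 1
          rw [lintegral_indicator m.measurableSet_toSet,
            Measure.restrict_restrict m.measurableSet_toSet,
            Set.inter_eq_self_of_subset_right hQm]
          rfl
        rw [hlMax, ← havg]
        exact le_iSup_of_le Q (le_iSup_of_le hx le_rfl)
      have hlow : wt σ Q / ENNReal.ofReal Q.vol * (ENNReal.ofReal Q.vol / 2)
          ≤ ∫⁻ x in F Q, hlMax (m.toSet.indicator σ) x := by
        calc wt σ Q / ENNReal.ofReal Q.vol * (ENNReal.ofReal Q.vol / 2)
            ≤ wt σ Q / ENNReal.ofReal Q.vol * volume (F Q) :=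
              mul_le_mul_right (hFvol Q hQS) _
          _ = ∫⁻ _ in F Q, (wt σ Q / ENNReal.ofReal Q.vol) := (setLIntegral_const _ _).symm
          _ ≤ ∫⁻ x in F Q, hlMax (m.toSet.indicator σ) x := by
              refine lintegral_mono_ae ?_
              filter_upwards [ae_restrict_mem (hFm Q)] with x hx
              exact hc x (hFsub Q hx)
      have heq2 : wt σ Q / ENNReal.ofReal Q.vol * (ENNReal.ofReal Q.vol / 2)
          = wt σ Q / 2 := by
        rw [← mul_div_assoc, ENNReal.div_mul_cancel hvne ENNReal.ofReal_ne_top]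
      rw [heq2] at hlow
      calc wt σ Q = 2 * (wt σ Q / 2) :=
            (ENNReal.mul_div_cancel two_ne_zero ENNReal.ofNat_ne_top).symm
        _ ≤ 2 * ∫⁻ x in F Q, hlMax (m.toSet.indicator σ) x := mul_le_mul_right hlow _
    have hdisjS : Pairwise (Function.onFun Disjoint fun Q : ↥{Q | Q ∈ T ∧ Q.toSet ⊆ m.toSet} => F Q.1) := by
      intro a b hab
      exact hFdisj a.1 a.2.1.1 b.1 b.2.1.1 (fun he => hab (Subtype.ext he))
    have hsum : (∑' Q : ↥{Q | Q ∈ T ∧ Q.toSet ⊆ m.toSet},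
          ∫⁻ x in F Q.1, hlMax (m.toSet.indicator σ) x)
        ≤ ∫⁻ x in m.toSet, hlMax (m.toSet.indicator σ) x := by
      refine le_trans (le_of_eq ?_) (lintegral_mono'
        (Measure.restrict_mono (Set.iUnion_subset
          (fun Q : ↥{Q | Q ∈ T ∧ Q.toSet ⊆ m.toSet} => (hFsub Q.1).trans Q.2.2)) le_rfl)
        le_rfl)
      rw [Measure.restrict_iUnion hdisjS (fun Q => hFm Q.1)]
      exact (lintegral_sum_measure _ _).symm
    have hent : (∫⁻ x in m.toSet, hlMax (m.toSet.indicator σ) x)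
        ≤ (2:ℝ≥0∞) ^ (r:ℝ) * wt σ m := by
      have hw := hTw m hm
      have hh : entropy σ m * wt σ m = ∫⁻ x in m.toSet, hlMax (m.toSet.indicator σ) x := by
        rw [entropy]
        exact ENNReal.div_mul_cancel hw.1 hw.2
      rw [← hh]
      exact mul_le_mul_left hm.2.2.2 _
    calc (∑' Q : ↥{Q | Q ∈ T ∧ Q.toSet ⊆ m.toSet}, wt σ Q.1)
        ≤ ∑' Q : ↥{Q | Q ∈ T ∧ Q.toSet ⊆ m.toSet},
            2 * ∫⁻ x in F Q.1, hlMax (m.toSet.indicator σ) x :=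
          Summable.tsum_le_tsum (fun Q => key Q.1 Q.2.1 Q.2.2) ENNReal.summable ENNReal.summable
      _ = 2 * ∑' Q : ↥{Q | Q ∈ T ∧ Q.toSet ⊆ m.toSet},
            ∫⁻ x in F Q.1, hlMax (m.toSet.indicator σ) x := ENNReal.tsum_mul_left
      _ ≤ 2 * ∫⁻ x in m.toSet, hlMax (m.toSet.indicator σ) x := mul_le_mul_right hsum _
      _ ≤ 2 * ((2:ℝ≥0∞) ^ (r:ℝ) * wt σ m) := mul_le_mul_right hent _
      _ = 2 * (2:ℝ≥0∞) ^ (r:ℝ) * wt σ m := (mul_assoc _ _ _).symm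
  -- choice of maximal elements
  obtain ⟨kP, hkP⟩ := hD.1 P hP
  have exMax : ∀ Q : ↥T, ∃ m : ↥T, Q.1.toSet ⊆ m.1.toSet ∧
      ∀ R : ↥T, m.1.toSet ⊆ R.1.toSet → R = m := by
    intro Q
    have hUne : ({R | R ∈ T ∧ Q.1.toSet ⊆ R.toSet} : Set (Cube n)).Nonempty :=
      ⟨Q.1, Q.2, subset_rfl⟩
    have hdy : ∀ R ∈ {R | R ∈ T ∧ Q.1.toSet ⊆ R.toSet}, ∃ k : ℤ, R.side = 2 ^ k :=
      fun R hR => hD.1 R (hSD hR.1.1)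
    have hbd : ∀ R ∈ {R | R ∈ T ∧ Q.1.toSet ⊆ R.toSet}, R.side ≤ 2 ^ kP := by
      intro R hR
      rw [← hkP]
      exact Cube.side_le_of_subset hn hR.1.2.1
    obtain ⟨m, hmU, hmax⟩ := exists_max_side hUne hdy hbd
    refine ⟨⟨m, hmU.1⟩, hmU.2, ?_⟩
    intro R hmR
    have hRU : R.1 ∈ {R | R ∈ T ∧ Q.1.toSet ⊆ R.toSet} := ⟨R.2, hmU.2.trans hmR⟩
    have heqm : m = R.1 := Cube.eq_of_subset_of_side_eq hmR
      (le_antisymm (Cube.side_le_of_subset hn hmR) (hmax R.1 hRU))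
    exact Subtype.ext heqm.symm
  set Mx : ↥T → ↥T := fun Q => (exMax Q).choose with hMxdef
  have hMx1 : ∀ Q : ↥T, Q.1.toSet ⊆ (Mx Q).1.toSet := fun Q => (exMax Q).choose_spec.1
  have hMx2 : ∀ Q : ↥T, ∀ R : ↥T, (Mx Q).1.toSet ⊆ R.1.toSet → R = Mx Q :=
    fun Q => (exMax Q).choose_spec.2
  have hmaxdisj : ∀ m1 m2 : ↥T,
      (∀ R : ↥T, m1.1.toSet ⊆ R.1.toSet → R = m1) →
      (∀ R : ↥T, m2.1.toSet ⊆ R.1.toSet → R = m2) →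
      m1 ≠ m2 → Disjoint m1.1.toSet m2.1.toSet := by
    intro m1 m2 h1 h2 hne
    rw [Set.disjoint_iff_inter_eq_empty]
    by_contra hint
    rcases hnest m1.1 m1.2.1 m2.1 m2.2.1 (Set.nonempty_iff_ne_empty.mpr hint) with h | h
    · exact hne (h1 m2 h).symm
    · exact hne (h2 m1 h)
  -- regroup the sum according to the maximal element
  have hgroup : (∑' Q : ↥T, wt σ Q.1 ^ (q/p))
      = ∑' m : ↥T, ∑' Q : {Q : ↥T // Mx Q = m}, wt σ Q.1.1 ^ (q/p) :=
    ((Equiv.sigmaFiberEquiv Mx).tsum_eq (fun Q : ↥T => wt σ Q.1 ^ (q/p))).symm.trans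
      (ENNReal.tsum_sigma' _)
  have hperm : ∀ m : ↥T, (∑' Q : {Q : ↥T // Mx Q = m}, wt σ Q.1.1 ^ (q/p))
      ≤ (if ∀ R : ↥T, m.1.toSet ⊆ R.1.toSet → R = m
          then (2 * (2:ℝ≥0∞) ^ (r:ℝ) * wt σ m.1) ^ (q/p) else 0) := by
    intro m
    obtain he | hne := isEmpty_or_nonempty {Q : ↥T // Mx Q = m}
    · rw [tsum_empty]
      exact zero_le
    · obtain ⟨Q0⟩ := hne
      have hmmax : ∀ R : ↥T, m.1.toSet ⊆ R.1.toSet → R = m := by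
        have h0 := hMx2 Q0.1
        rw [Q0.2] at h0
        exact h0
      rw [if_pos hmmax]
      have hfib : ∀ Q : {Q : ↥T // Mx Q = m}, Q.1.1.toSet ⊆ m.1.toSet := by
        intro Q
        have h1 := hMx1 Q.1
        have h2 : (Mx Q.1).1.toSet = m.1.toSet := congrArg (fun z : ↥T => z.1.toSet) Q.2
        rw [h2] at h1
        exact h1
      have hinj : Function.Injective (fun Q : {Q : ↥T // Mx Q = m} =>
          (⟨Q.1.1, Q.1.2, hfib Q⟩ : ↥{Q | Q ∈ T ∧ Q.toSet ⊆ m.1.toSet})) := by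
        intro a b hab
        have h3 : a.1.1 = b.1.1 := by
          have h4 := congrArg (fun z : ↥{Q | Q ∈ T ∧ Q.toSet ⊆ m.1.toSet} => z.1) hab
          simpa using h4
        exact Subtype.ext (Subtype.ext h3)
      calc (∑' Q : {Q : ↥T // Mx Q = m}, wt σ Q.1.1 ^ (q/p))
          ≤ (∑' Q : {Q : ↥T // Mx Q = m}, wt σ Q.1.1) ^ (q/p) := tsum_rpow_le _ hs1
        _ ≤ (∑' Q : ↥{Q | Q ∈ T ∧ Q.toSet ⊆ m.1.toSet}, wt σ Q.1) ^ (q/p) :=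
            ENNReal.rpow_le_rpow
              (ENNReal.tsum_comp_le_tsum_of_injective hinj (fun Q => wt σ Q.1)) hs0.le
        _ ≤ (2 * (2:ℝ≥0∞) ^ (r:ℝ) * wt σ m.1) ^ (q/p) :=
            ENNReal.rpow_le_rpow (hinner m.1 m.2) hs0.le
  have hPsum : (∑' m : ↥T, (if ∀ R : ↥T, m.1.toSet ⊆ R.1.toSet → R = m
        then wt σ m.1 else 0)) ≤ wt σ P := by
    have h1 : (∑' m : ↥{m : ↥T | ∀ R : ↥T, m.1.toSet ⊆ R.1.toSet → R = m}, wt σ m.1.1)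
        = ∑' m : ↥T, (if ∀ R : ↥T, m.1.toSet ⊆ R.1.toSet → R = m then wt σ m.1 else 0) := by
      rw [tsum_subtype {m : ↥T | ∀ R : ↥T, m.1.toSet ⊆ R.1.toSet → R = m}
        (fun m => wt σ m.1)]
      exact tsum_congr fun m => by
        rw [Set.indicator_apply]
        rfl
    rw [← h1]
    have h2 : ∀ m : ↥{m : ↥T | ∀ R : ↥T, m.1.toSet ⊆ R.1.toSet → R = m},
        wt σ m.1.1 = (volume.withDensity σ) m.1.1.toSet :=
      fun m => (withDensity_apply σ m.1.1.measurableSet_toSet).symm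
    rw [tsum_congr h2]
    have hdisj2 : Pairwise (Function.onFun Disjoint
        fun m : ↥{m : ↥T | ∀ R : ↥T, m.1.toSet ⊆ R.1.toSet → R = m} => m.1.1.toSet) := by
      intro a b hab
      exact hmaxdisj a.1 b.1 a.2 b.2 (fun he => hab (Subtype.ext he))
    rw [← measure_iUnion hdisj2 (fun m => m.1.1.measurableSet_toSet)]
    calc (volume.withDensity σ)
          (⋃ m : ↥{m : ↥T | ∀ R : ↥T, m.1.toSet ⊆ R.1.toSet → R = m}, m.1.1.toSet)
        ≤ (volume.withDensity σ) P.toSet :=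
          measure_mono (Set.iUnion_subset fun m => m.1.2.2.1)
      _ = wt σ P := withDensity_apply σ P.measurableSet_toSet
  -- put everything together
  calc (∑' Q : ↥T, wt σ Q.1 ^ (q/p))
      = ∑' m : ↥T, ∑' Q : {Q : ↥T // Mx Q = m}, wt σ Q.1.1 ^ (q/p) := hgroup
    _ ≤ ∑' m : ↥T, (if ∀ R : ↥T, m.1.toSet ⊆ R.1.toSet → R = m
          then (2 * (2:ℝ≥0∞) ^ (r:ℝ) * wt σ m.1) ^ (q/p) else 0) :=
        Summable.tsum_le_tsum hperm ENNReal.summable ENNReal.summable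
    _ = ∑' m : ↥T, (2 * (2:ℝ≥0∞) ^ (r:ℝ)) ^ (q/p) *
          (if ∀ R : ↥T, m.1.toSet ⊆ R.1.toSet → R = m then wt σ m.1 else 0) ^ (q/p) := by
        refine tsum_congr fun m => ?_
        split_ifs with h
        · rw [ENNReal.mul_rpow_of_nonneg _ _ hs0.le]
        · rw [ENNReal.zero_rpow_of_pos hs0, mul_zero]
    _ = (2 * (2:ℝ≥0∞) ^ (r:ℝ)) ^ (q/p) * ∑' m : ↥T,
          (if ∀ R : ↥T, m.1.toSet ⊆ R.1.toSet → R = m then wt σ m.1 else 0) ^ (q/p) :=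
        ENNReal.tsum_mul_left
    _ ≤ (2 * (2:ℝ≥0∞) ^ (r:ℝ)) ^ (q/p) * (∑' m : ↥T,
          (if ∀ R : ↥T, m.1.toSet ⊆ R.1.toSet → R = m then wt σ m.1 else 0)) ^ (q/p) :=
        mul_le_mul_right (tsum_rpow_le _ hs1) _
    _ ≤ (2 * (2:ℝ≥0∞) ^ (r:ℝ)) ^ (q/p) * wt σ P ^ (q/p) :=
        mul_le_mul_right (ENNReal.rpow_le_rpow hPsum hs0.le) _
    _ = (2:ℝ≥0∞) ^ (q/p) * (2:ℝ≥0∞) ^ (q * r / p) * wt σ P ^ (q/p) := by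
        congr 1
        rw [ENNReal.mul_rpow_of_nonneg _ _ hs0.le, ← ENNReal.rpow_mul]
        congr 1
        ring_nf
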